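/- If a finite loop Q has a k-plex in its multiplication table (or even just a regular row k-plex), then P^k(Q) intersects the associator subloop A(Q). In particular, if Q has a transversal then P(Q) ∩ A(Q) ≠ ∅. -/

import Mathlib

/-- A loop: a magma with two-sided identity in which all left and right
translations are bijections. -/
class Loop (Q : Type*) extends Mul Q, One Q where
  one_mul : ∀ a : Q, 1 * a = a
  mul_one : ∀ a : Q, a * 1 = a
  mulLeft_bijective : ∀ a : Q, Function.Bijective fun x : Q => a * x
  mulRight_bijective : ∀ a : Q, Function.Bijective fun x : Q => x * a

/-- `IsProdOf s x` means `x` can be written as a product, under some ordering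
and association, whose multiset of factors is exactly `s`. -/
inductive IsProdOf {Q : Type*} [Mul Q] : Multiset Q → Q → Prop
  | single (a : Q) : IsProdOf {a} a
  | mul {s t : Multiset Q} {a b : Q} :
      IsProdOf s a → IsProdOf t b → IsProdOf (s + t) (a * b)

/-- `fullProds Q k` is `P^k(Q)`: elements expressible as a product (in some
order and association) containing each element of `Q` exactly `k` times. -/
def fullProds (Q : Type*) [Mul Q] [Fintype Q] (k : ℕ) : Set Q :=
  {x | IsProdOf (k • (Finset.univ : Finset Q).val) x}

/-- The smallest congruence on `Q` whose quotient is a group; its class of `1`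
is the associator subloop `A(Q)`, and its classes are the cosets of `A(Q)`. -/
def assocRel {Q : Type*} [Mul Q] (x y : Q) : Prop :=
  ∀ r : Q → Q → Prop, Equivalence r →
    (∀ a b c d, r a b → r c d → r (a * c) (b * d)) →
    (∀ a b c, r ((a * b) * c) (a * (b * c))) →
    r x y

/-- The smallest congruence on `Q` whose quotient is an abelian group; its
class of `1` is the derived subloop `Q'`, and its classes are the cosets of `Q'`. -/
def commRel {Q : Type*} [Mul Q] (x y : Q) : Prop :=
  ∀ r : Q → Q → Prop, Equivalence r →
    (∀ a b c d, r a b → r c d → r (a * c) (b * d)) →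
    (∀ a b c, r ((a * b) * c) (a * (b * c))) →
    (∀ a b, r (a * b) (b * a)) →
    r x y

/-! ### Auxiliary development -/

section RelLemmas
variable {Q : Type*} [Mul Q]

theorem assocRel_refl (x : Q) : assocRel x x := fun _ hr _ _ => hr.refl x
theorem assocRel_symm {x y : Q} (h : assocRel x y) : assocRel y x :=
  fun r hr hm ha => hr.symm (h r hr hm ha)
theorem assocRel_trans {x y z : Q} (h1 : assocRel x y) (h2 : assocRel y z) :
    assocRel x z :=
  fun r hr hm ha => hr.trans (h1 r hr hm ha) (h2 r hr hm ha)
theorem assocRel_mul {a b c d : Q} (h1 : assocRel a b) (h2 : assocRel c d) :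
    assocRel (a * c) (b * d) :=
  fun r hr hm ha => hm _ _ _ _ (h1 r hr hm ha) (h2 r hr hm ha)
theorem assocRel_assoc (a b c : Q) : assocRel ((a * b) * c) (a * (b * c)) :=
  fun _ _ _ ha => ha a b c

/-- The setoid given by `assocRel`. -/
def aSetoid (Q : Type*) [Mul Q] : Setoid Q :=
  ⟨assocRel, ⟨assocRel_refl, assocRel_symm, assocRel_trans⟩⟩

/-- The quotient of `Q` by `assocRel`. -/
def AG (Q : Type*) [Mul Q] : Type _ := Quotient (aSetoid Q)

/-- Canonical projection. -/
def amk (a : Q) : AG Q := Quotient.mk (aSetoid Q) a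

instance : Mul (AG Q) :=
  ⟨Quotient.map₂ (· * ·) (fun _ _ h _ _ h2 => assocRel_mul h h2)⟩

theorem amk_mul (a b : Q) : amk a * amk b = amk (a * b) := rfl

theorem AG.ind {p : AG Q → Prop} (h : ∀ a : Q, p (amk a)) : ∀ g : AG Q, p g :=
  Quotient.ind h

end RelLemmas

section LoopQuot
variable {Q : Type*} [Loop Q]

instance : Monoid (AG Q) where
  one := amk 1
  mul_assoc := by
    refine AG.ind fun a => AG.ind fun b => AG.ind fun c => ?_
    exact Quotient.sound (assocRel_assoc a b c)
  one_mul := AG.ind fun a => congrArg amk (Loop.one_mul a)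
  mul_one := AG.ind fun a => congrArg amk (Loop.mul_one a)

theorem amk_one : (1 : AG Q) = amk 1 := rfl

theorem AG.exists_right_inv : ∀ g : AG Q, ∃ h, g * h = 1 := by
  refine AG.ind fun a => ?_
  obtain ⟨b, hb⟩ := (Loop.mulLeft_bijective a).2 1
  exact ⟨amk b, congrArg amk hb⟩

end LoopQuot

section Euler
variable {M : Type*} [Monoid M]

theorem two_sided_inv (hinv : ∀ a : M, ∃ b, a * b = 1) (x : M) :
    ∃ y, x * y = 1 ∧ y * x = 1 := by
  obtain ⟨y, hy⟩ := hinv x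
  obtain ⟨z, hz⟩ := hinv y
  have hyx : y * x = 1 := by
    have : y * x = y * (x * (y * z)) := by rw [hz, mul_one]
    rw [this, ← mul_assoc x y z, hy, one_mul, hz]
  exact ⟨y, hy, hyx⟩

theorem myEqOneOfMulRight (hinv : ∀ a : M, ∃ b, a * b = 1) {l x : M}
    (h : l * x = x) : l = 1 := by
  obtain ⟨y, hxy, _⟩ := two_sided_inv hinv x
  calc l = l * (x * y) := by rw [hxy, mul_one]
    _ = (l * x) * y := by rw [mul_assoc]
    _ = x * y := by rw [h]
    _ = 1 := hxy

/-- Eulerian-style lemma: edges `(x, ℓ)` go from `x` to `ℓ * x`.  If the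
multiset of sources equals the multiset of targets, the labels can be
ordered into a list of product 1. -/
theorem euler_lemma (hinv : ∀ a : M, ∃ b, a * b = 1) :
    ∀ (n : ℕ) (E : Multiset (M × M)), E.card = n →
      E.map Prod.fst = E.map (fun e => e.2 * e.1) →
      ∃ L : List M, (L : Multiset M) = E.map Prod.snd ∧ L.prod = 1 := by
  intro n
  induction n using Nat.strong_induction_on with
  | _ n ih =>
    intro E hcard hbal
    rcases E.empty_or_exists_mem with rfl | ⟨e, he⟩
    · exact ⟨[], by simp, by simp⟩
    obtain ⟨E₁, rfl⟩ := Multiset.exists_cons_of_mem he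
    obtain ⟨x, l⟩ := e
    rw [Multiset.map_cons, Multiset.map_cons] at hbal
    by_cases hfix : l * x = x
    · -- l = 1, drop this self-loop
      have hl : l = 1 := myEqOneOfMulRight hinv hfix
      rw [hfix] at hbal
      have hbal₁ : E₁.map Prod.fst = E₁.map (fun e => e.2 * e.1) :=
        (Multiset.cons_inj_right x).mp hbal
      have hcard₁ : E₁.card < n := by
        rw [← hcard, Multiset.card_cons]; omega
      obtain ⟨L, hLm, hLp⟩ := ih E₁.card hcard₁ E₁ rfl hbal₁
      refine ⟨l :: L, ?_, ?_⟩
      · rw [Multiset.map_cons, ← hLm]; rfl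
      · rw [List.prod_cons, hLp, hl, one_mul]
    · -- find another edge with source l*x and merge
      have hmem : l * x ∈ E₁.map Prod.fst := by
        have : l * x ∈ (x ::ₘ E₁.map Prod.fst) := by
          rw [hbal]; exact Multiset.mem_cons_self _ _
        rcases Multiset.mem_cons.mp this with h | h
        · exact absurd h hfix
        · exact h
      obtain ⟨e₂, he₂, he₂1⟩ := Multiset.mem_map.mp hmem
      obtain ⟨y, l'⟩ := e₂
      simp only at he₂1
      subst he₂1
      obtain ⟨E₂, rfl⟩ := Multiset.exists_cons_of_mem he₂
      rw [Multiset.map_cons, Multiset.map_cons] at hbal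
      -- cancel (l*x) from both sides
      have hbal' : (x ::ₘ E₂.map Prod.fst)
          = ((l' * l) * x) ::ₘ E₂.map (fun e => e.2 * e.1) := by
        have h1 : (l * x) ::ₘ x ::ₘ E₂.map Prod.fst
            = (l * x) ::ₘ (l' * (l * x)) ::ₘ E₂.map (fun e => e.2 * e.1) := by
          rw [Multiset.cons_swap]; exact hbal
        have := (Multiset.cons_inj_right (l * x)).mp h1
        rw [this, mul_assoc]
      -- merged edge multiset
      have hbalE' : ((x, l' * l) ::ₘ E₂).map Prod.fst
          = ((x, l' * l) ::ₘ E₂).map (fun e => e.2 * e.1) := by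
        rw [Multiset.map_cons, Multiset.map_cons]; exact hbal'
      have hcardE' : ((x, l' * l) ::ₘ E₂).card < n := by
        rw [← hcard, Multiset.card_cons, Multiset.card_cons, Multiset.card_cons]
        omega
      obtain ⟨L', hL'm, hL'p⟩ := ih _ hcardE' _ rfl hbalE'
      rw [Multiset.map_cons] at hL'm
      -- (l' * l) occurs in L'
      have hmemL : (l' * l) ∈ L' := by
        have : (l' * l) ∈ (L' : Multiset M) := by
          rw [hL'm]; exact Multiset.mem_cons_self _ _
        exact Multiset.mem_coe.mp this
      obtain ⟨L₁, L₂, rfl⟩ := List.append_of_mem hmemL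
      refine ⟨L₁ ++ l' :: l :: L₂, ?_, ?_⟩
      · -- multiset bookkeeping
        have h1 : (↑(L₁ ++ (l' * l) :: L₂) : Multiset M)
            = (l' * l) ::ₘ (↑L₁ + ↑L₂) := by
          rw [← Multiset.coe_add, ← Multiset.cons_coe, Multiset.add_cons]
        have hsplit : (↑L₁ + ↑L₂ : Multiset M) = E₂.map Prod.snd := by
          have h0 : (↑(L₁ ++ (l' * l) :: L₂) : Multiset M)
              = (l' * l) ::ₘ E₂.map Prod.snd := hL'm
          rw [h1] at h0
          exact (Multiset.cons_inj_right _).mp h0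
        show (↑(L₁ ++ l' :: l :: L₂) : Multiset M)
            = Multiset.map Prod.snd ((x, l) ::ₘ (l * x, l') ::ₘ E₂)
        rw [Multiset.map_cons, Multiset.map_cons, ← Multiset.coe_add,
          ← Multiset.cons_coe, ← Multiset.cons_coe, Multiset.add_cons,
          Multiset.add_cons, hsplit]
        rw [Multiset.cons_swap]
      · rw [List.prod_append, List.prod_cons, List.prod_cons]
        rw [List.prod_append, List.prod_cons] at hL'p
        rw [← hL'p, ← mul_assoc l' l]

end Euler

section Lift
variable {α β : Type*}

/-- Lift a list along the image of a multiset under a map. -/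
theorem lift_list (f : α → β) :
    ∀ (L : List β) (s : Multiset α), s.map f = ↑L →
      ∃ l : List α, (↑l : Multiset α) = s ∧ l.map f = L := by
  intro L
  induction L with
  | nil =>
    intro s h
    refine ⟨[], ?_, rfl⟩
    have : s = 0 := by
      rw [Multiset.coe_nil] at h
      exact Multiset.map_eq_zero.mp h
    simp [this]
  | cons b L ih =>
    intro s h
    have hb : b ∈ s.map f := by
      rw [h]; exact Multiset.mem_coe.mpr List.mem_cons_self
    obtain ⟨a, ha, rfl⟩ := Multiset.mem_map.mp hb
    obtain ⟨s', rfl⟩ := Multiset.exists_cons_of_mem ha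
    have h' : s'.map f = ↑L := by
      rw [Multiset.map_cons, ← Multiset.cons_coe] at h
      exact (Multiset.cons_inj_right _).mp h
    obtain ⟨l, hl, hlf⟩ := ih s' h'
    exact ⟨a :: l, by rw [← Multiset.cons_coe, hl], by simp [hlf]⟩

end Lift

section Counting
variable {α β : Type*} [DecidableEq β]

omit [DecidableEq β] in
theorem count_map_filter [DecidableEq β] (C : Finset α) (f : α → β) (b : β) :
    Multiset.count b (C.val.map f) = (C.filter fun t => f t = b).card := by
  rw [Multiset.count_map]
  have : (C.filter fun t => f t = b).card
      = Multiset.card (C.val.filter fun t => f t = b) := rfl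
  rw [this]
  congr 1
  apply Multiset.filter_congr
  intro t _
  exact ⟨Eq.symm, Eq.symm⟩

end Counting

section Folds
variable {Q : Type*} [Mul Q]

theorem isProdOf_foldl :
    ∀ (l : List Q) (s : Multiset Q) (x : Q), IsProdOf s x →
      IsProdOf (s + (↑l : Multiset Q)) (l.foldl (· * ·) x) := by
  intro l
  induction l with
  | nil =>
    intro s x hx
    rw [Multiset.coe_nil, add_zero]
    exact hx
  | cons b l ih =>
    intro s x hx
    have h2 := ih _ _ (IsProdOf.mul hx (IsProdOf.single b))
    rw [List.foldl_cons]
    have he : s + (↑(b :: l) : Multiset Q) = (s + {b}) + ↑l := by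
      rw [← Multiset.cons_coe, ← Multiset.singleton_add, ← add_assoc]
    rw [he]
    exact h2

theorem amk_foldl [Loop Q] :
    ∀ (l : List Q) (x : Q),
      amk (l.foldl (· * ·) x) = (l.map amk).foldl (· * ·) (amk x) := by
  intro l
  induction l with
  | nil => intro x; rfl
  | cons b l ih =>
    intro x
    simp only [List.foldl_cons, List.map_cons]
    rw [ih, amk_mul]

theorem foldl_eq_prod {M : Type*} [Monoid M] :
    ∀ (L : List M) (g : M), L.foldl (· * ·) g = g * L.prod := by
  intro L
  induction L with
  | nil => intro g; simp
  | cons b L ih =>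
    intro g
    rw [List.foldl_cons, ih, List.prod_cons, mul_assoc]

end Folds

theorem kplex_full_kprod_mem_associator (Q : Type*) [Loop Q] [Fintype Q]
    [DecidableEq Q] (k : ℕ) (hk : 1 ≤ k) (C : Finset (Q × Q × Q))
    (htable : ∀ t ∈ C, t.2.2 = t.1 * t.2.1)
    (hplex :
      -- C is a k-plex …
      ((∀ s : Q, (C.filter fun t => t.1 = s).card = k) ∧
       (∀ s : Q, (C.filter fun t => t.2.1 = s).card = k) ∧
       (∀ s : Q, (C.filter fun t => t.2.2 = s).card = k)) ∨
      -- … or just a regular row k-plex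
      ((∀ s : Q, (C.filter fun t => t.1 = s).card = k) ∧
       (∀ s : Q, (C.filter fun t => t.2.1 = s).card
               = (C.filter fun t => t.2.2 = s).card))) :
    ∃ x : Q, x ∈ fullProds Q k ∧ assocRel x 1 := by
  classical
  -- extract the multiset-level facts
  have hrowF : ∀ s : Q, (C.filter fun t => t.1 = s).card = k := by
    rcases hplex with ⟨h, _, _⟩ | ⟨h, _⟩ <;> exact h
  have hceF : ∀ s : Q, (C.filter fun t => t.2.1 = s).card
      = (C.filter fun t => t.2.2 = s).card := by
    rcases hplex with ⟨_, h2, h3⟩ | ⟨_, h⟩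
    · intro s; rw [h2 s, h3 s]
    · exact h
  -- row multiset is k • univ
  have hrow : C.val.map (fun t => t.1) = k • (Finset.univ : Finset Q).val := by
    apply Multiset.ext.mpr
    intro a
    rw [count_map_filter, hrowF a, Multiset.count_nsmul, Multiset.count_univ,
      mul_one]
  -- column multiset = entry multiset
  have hce : C.val.map (fun t => t.2.1) = C.val.map (fun t => t.2.2) := by
    apply Multiset.ext.mpr
    intro a
    rw [count_map_filter, count_map_filter, hceF a]
  -- edge multiset in AG Q
  set E : Multiset (AG Q × AG Q)
    := C.val.map (fun t => (amk t.2.1, amk t.1)) with hE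
  have hL : E.map Prod.fst = (C.val.map fun t => t.2.1).map amk := by
    rw [hE, Multiset.map_map, Multiset.map_map]; rfl
  have hR : E.map (fun e => e.2 * e.1) = (C.val.map fun t => t.2.2).map amk := by
    rw [hE, Multiset.map_map, Multiset.map_map]
    apply Multiset.map_congr rfl
    intro t ht
    show amk t.1 * amk t.2.1 = amk t.2.2
    rw [amk_mul]
    exact congrArg amk (htable t (Finset.mem_val.mp ht)).symm
  have hbal : E.map Prod.fst = E.map (fun e => e.2 * e.1) := by
    rw [hL, hR, hce]
  have hlab : E.map Prod.snd = (k • (Finset.univ : Finset Q).val).map amk := by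
    rw [hE, Multiset.map_map, ← hrow, Multiset.map_map]; rfl
  obtain ⟨L, hLm, hLp⟩ := euler_lemma AG.exists_right_inv E.card E rfl hbal
  rw [hlab] at hLm
  obtain ⟨lq, hlq, hlqf⟩ := lift_list amk L _ hLm.symm
  -- lq is nonempty
  have hone : (1 : Q) ∈ (↑lq : Multiset Q) := by
    rw [hlq]
    rw [Multiset.mem_nsmul]
    exact ⟨by omega, Finset.mem_univ_val 1⟩
  match lq, hlq, hlqf, hone with
  | [], hlq, hlqf, hone => exact absurd hone (by simp)
  | a :: l, hlq, hlqf, hone =>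
    refine ⟨l.foldl (· * ·) a, ?_, ?_⟩
    · show IsProdOf (k • (Finset.univ : Finset Q).val) _
      have h := isProdOf_foldl l {a} a (IsProdOf.single a)
      have he : ({a} : Multiset Q) + ↑l = ↑(a :: l) := by
        rw [Multiset.singleton_add, Multiset.cons_coe]
      rw [he, hlq] at h
      exact h
    · have hmkeq : amk (l.foldl (· * ·) a) = amk 1 := by
        rw [amk_foldl, foldl_eq_prod]
        have hmap : amk a :: List.map amk l = L := hlqf
        rw [← amk_one, ← hLp, ← hmap, List.prod_cons]
      exact Quotient.exact hmkeq
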